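/- Consider the R-process with parameters r ≥ 2, ε ∈ [0,1], δ > 0 and γ = 1−(1+δ)/r. Let F' be an admissible strategy and U' = (C',S',B',I') an initial state, and let U = (C,S,B,I) be an initial state dominating U', i.e., S ≥ S', I ≥ I', and S+B+I−γrC ≥ S'+B'+I'−γrC'. Then there exists an admissible strategy F such that E[I_∞(U,F)] ≥ E[I_∞(U',F')]. -/

import Mathlib

open Finset Filter
open scoped ENNReal Classical

/-- State of the R-process: internal check nodes `C`, surviving edges `S`,
boundary variables `B`, internal variables `I`. -/
structure RState where
  C : ℤ
  S : ℤ
  B : ℤ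
  I : ℤ

/-- A (possibly randomized) strategy: at each step it sees the history of
past `(coin, aux)` pairs together with its current auxiliary random value
(drawn i.i.d. from `aux`), and decides whether to perform a boundary step
(`true`) or a regular step (`false`). -/
structure RStrategy where
  aux : PMF ℕ
  decide : List (Bool × ℕ) → ℕ → Bool

/-- One run of the R-process for `t` steps, driven by the stream `h` of
`(coin, aux)` pairs: the coin `true` means a regular step "extends"
(probability ε), `false` that it "prunes"; the process freezes once `S ≤ 0`. -/
def rstep (r : ℕ) (F : RStrategy) (U0 : RState) (h : ℕ → Bool × ℕ) : ℕ → RState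
  | 0 => U0
  | t + 1 =>
    let cur := rstep r F U0 h t
    if cur.S ≤ 0 then cur
    else if F.decide (List.ofFn fun i : Fin t => h i) (h t).2 then
      ⟨cur.C + 1, cur.S + ((r : ℤ) - 2), cur.B - 1, cur.I + 1⟩
    else if (h t).1 then
      ⟨cur.C + 2, cur.S + (2 * (r : ℤ) - 3), cur.B, cur.I + 1⟩
    else
      ⟨cur.C, cur.S - 1, cur.B + 1, cur.I⟩

/-- Admissibility of a strategy from initial state `U0`: along every possible
history the state always satisfies `γ r C ≤ S + B + I`. -/
def RAdmissible (r : ℕ) (γ : ℝ) (F : RStrategy) (U0 : RState) : Prop :=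
  ∀ (h : ℕ → Bool × ℕ) (t : ℕ),
    γ * r * ((rstep r F U0 h t).C : ℝ) ≤
      ((rstep r F U0 h t).S : ℝ) + ((rstep r F U0 h t).B : ℝ) +
        ((rstep r F U0 h t).I : ℝ)

/-- Product of `k` independent copies of a PMF. -/
noncomputable def pmfPi {α : Type} (p : PMF α) : (k : ℕ) → PMF (Fin k → α)
  | 0 => PMF.pure fun i => i.elim0
  | k + 1 => p.bind fun x => (pmfPi p k).map (Fin.cons x)

/-- Bernoulli PMF on `Bool` with success probability `ε` (clipped to `[0,1]`). -/
noncomputable def bern (ε : ℝ) : PMF Bool :=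
  PMF.bernoulli (min (Real.toNNReal ε) 1) (min_le_right _ _)

/-- Distribution of one `(coin, aux)` pair: an independent Bernoulli(ε) coin
and an auxiliary value with law `ν`. -/
noncomputable def coinPMF (ε : ℝ) (ν : PMF ℕ) : PMF (Bool × ℕ) :=
  (bern ε).bind fun c => ν.map fun u => (c, u)

/-- Extend a finite tuple to an infinite stream by a default value. -/
def extendFin {α : Type} (d : α) {t : ℕ} (hf : Fin t → α) : ℕ → α :=
  fun i => if h : i < t then hf ⟨i, h⟩ else d

/-- Expected total increase `E[I_∞ - I_0]` of the `I`-component of the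
R-process started at `U0` under strategy `F` (the increments of `I` are
nonnegative, so this is the monotone limit of the finite-horizon
expectations). -/
noncomputable def EIinc (r : ℕ) (ε : ℝ) (F : RStrategy) (U0 : RState) : ℝ≥0∞ :=
  ⨆ t : ℕ, ∑' hf : Fin t → Bool × ℕ,
    pmfPi (coinPMF ε F.aux) t hf *
      (((rstep r F U0 (extendFin (false, 0) hf) t).I - U0.I).toNat : ℝ≥0∞)

/-- One step of the greedy replay used to define the greedy strategy. -/
noncomputable def greedyStep (r : ℕ) (δ : ℝ) (st : RState) (x : Bool × ℕ) : RState :=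
  if st.S ≤ 0 then st
  else if (1 - (1 + δ) / r) * r * (st.C : ℝ) ≤
      (st.S : ℝ) + (st.B : ℝ) + (st.I : ℝ) - (1 - δ) then
    ⟨st.C + 1, st.S + ((r : ℤ) - 2), st.B - 1, st.I + 1⟩
  else if x.1 then
    ⟨st.C + 2, st.S + (2 * (r : ℤ) - 3), st.B, st.I + 1⟩
  else
    ⟨st.C, st.S - 1, st.B + 1, st.I⟩

/-- The greedy strategy `F^g` (for `γ = 1 - (1+δ)/r`): perform a boundary step
exactly when `γ r C ≤ S + B + I - (1-δ)` holds for the current state (which it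
recomputes by replaying the history). -/
noncomputable def greedy (r : ℕ) (δ : ℝ) (U0 : RState) : RStrategy where
  aux := PMF.pure 0
  decide hist _ :=
    let st := hist.foldl (greedyStep r δ) U0
    if (1 - (1 + δ) / r) * r * (st.C : ℝ) ≤
        (st.S : ℝ) + (st.B : ℝ) + (st.I : ℝ) - (1 - δ) then true else false

lemma RState.ext' {a b : RState} (h1 : a.C = b.C) (h2 : a.S = b.S)
    (h3 : a.B = b.B) (h4 : a.I = b.I) : a = b := by
  cases a; cases b; simp_all

/-- Replay of the `F'`-process from `U'` along a finite history, together with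
the accumulated history (used to feed `F'.decide`). -/
def rrep (r : ℕ) (F' : RStrategy) (U' : RState) (hist : List (Bool × ℕ)) :
    RState × List (Bool × ℕ) :=
  hist.foldl (fun p x =>
    (if p.1.S ≤ 0 then p.1
     else if F'.decide p.2 x.2 then ⟨p.1.C + 1, p.1.S + ((r : ℤ) - 2), p.1.B - 1, p.1.I + 1⟩
     else if x.1 then ⟨p.1.C + 2, p.1.S + (2 * (r : ℤ) - 3), p.1.B, p.1.I + 1⟩
     else ⟨p.1.C, p.1.S - 1, p.1.B + 1, p.1.I⟩,
     p.2 ++ [x])) (U', [])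

lemma rrep_eq (r : ℕ) (F' : RStrategy) (U' : RState) (h : ℕ → Bool × ℕ) (t : ℕ) :
    rrep r F' U' (List.ofFn fun i : Fin t => h i) =
      (rstep r F' U' h t, List.ofFn fun i : Fin t => h i) := by
  induction t with
  | zero => simp [rrep, rstep]
  | succ t ih =>
    have hofn : (List.ofFn fun i : Fin (t + 1) => h i) =
        (List.ofFn fun i : Fin t => h i) ++ [h t] := by
      rw [List.ofFn_succ']
      simp [List.concat_eq_append]
    rw [hofn]
    unfold rrep at ih ⊢
    rw [List.foldl_append, ih, List.foldl_cons, List.foldl_nil]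
    simp only [rstep, ← hofn]

/-- The mimicking strategy: follow `F'` while the simulated `F'`-process from
`U'` is alive, and always take regular steps afterwards. -/
noncomputable def mimic (r : ℕ) (F' : RStrategy) (U' : RState) : RStrategy :=
  ⟨F'.aux, fun hist u => if (rrep r F' U' hist).1.S ≤ 0 then false else F'.decide hist u⟩

lemma mimic_decide (r : ℕ) (F' : RStrategy) (U' : RState) (h : ℕ → Bool × ℕ) (t : ℕ)
    (u : ℕ) :
    (mimic r F' U').decide (List.ofFn fun i : Fin t => h i) u =
      if (rstep r F' U' h t).S ≤ 0 then false
      else F'.decide (List.ofFn fun i : Fin t => h i) u := by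
  simp [mimic, rrep_eq]

lemma mimic_invariant (r : ℕ) (hr : 2 ≤ r) (δ : ℝ) (hδ : 0 < δ) (γ : ℝ)
    (hγ : γ = 1 - (1 + δ) / r) (F' : RStrategy) (U U' : RState)
    (hS : U'.S ≤ U.S)
    (h : ℕ → Bool × ℕ) (t : ℕ) :
    ((rstep r F' U' h t).S > 0 →
      rstep r (mimic r F' U') U h t =
        ⟨(rstep r F' U' h t).C + (U.C - U'.C), (rstep r F' U' h t).S + (U.S - U'.S),
         (rstep r F' U' h t).B + (U.B - U'.B), (rstep r F' U' h t).I + (U.I - U'.I)⟩) ∧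
    ((rstep r F' U' h t).I + (U.I - U'.I) ≤ (rstep r (mimic r F' U') U h t).I) ∧
    (((rstep r F' U' h t).S : ℝ) + ((rstep r F' U' h t).B : ℝ) +
        ((rstep r F' U' h t).I : ℝ) - γ * r * ((rstep r F' U' h t).C : ℝ) +
        (((U.S : ℝ) + (U.B : ℝ) + (U.I : ℝ) - γ * r * (U.C : ℝ)) -
          ((U'.S : ℝ) + (U'.B : ℝ) + (U'.I : ℝ) - γ * r * (U'.C : ℝ))) ≤
      ((rstep r (mimic r F' U') U h t).S : ℝ) + ((rstep r (mimic r F' U') U h t).B : ℝ) +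
        ((rstep r (mimic r F' U') U h t).I : ℝ) -
          γ * r * ((rstep r (mimic r F' U') U h t).C : ℝ)) := by
  have hr0 : (r : ℝ) ≠ 0 := by positivity
  have hγr : γ * (r : ℝ) = (r : ℝ) - 1 - δ := by
    rw [hγ]; field_simp; ring
  induction t with
  | zero =>
    refine ⟨fun _ => ?_, by simp [rstep], by simp [rstep]⟩
    simp only [rstep]
    refine RState.ext' ?_ ?_ ?_ ?_ <;> simp <;> ring
  | succ t ih =>
    obtain ⟨ih1, ih2, ih3⟩ := ih
    set Y' := rstep r F' U' h t with hY'
    set Y := rstep r (mimic r F' U') U h t with hY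
    by_cases hAlive : Y'.S > 0
    · -- synced case: same decision, same step, shift preserved
      have hYeq := ih1 hAlive
      have hYS : ¬ Y.S ≤ 0 := by
        rw [hYeq]; simp only; omega
      have hY'S : ¬ Y'.S ≤ 0 := by omega
      have hdec : (mimic r F' U').decide (List.ofFn fun i : Fin t => h i) (h t).2 =
          F'.decide (List.ofFn fun i : Fin t => h i) (h t).2 := by
        rw [mimic_decide]; simp [hY'S, ← hY']
      have hshift : rstep r (mimic r F' U') U h (t + 1) =
          ⟨(rstep r F' U' h (t + 1)).C + (U.C - U'.C),
           (rstep r F' U' h (t + 1)).S + (U.S - U'.S),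
           (rstep r F' U' h (t + 1)).B + (U.B - U'.B),
           (rstep r F' U' h (t + 1)).I + (U.I - U'.I)⟩ := by
        simp only [rstep, ← hY', ← hY, if_neg hYS, if_neg hY'S, hdec]
        by_cases hd : F'.decide (List.ofFn fun i : Fin t => h i) (h t).2
        · rw [if_pos hd, if_pos hd, hYeq]
          refine RState.ext' ?_ ?_ ?_ ?_ <;> simp <;> ring
        · rw [if_neg hd, if_neg hd]
          by_cases hc : (h t).1
          · rw [if_pos hc, if_pos hc, hYeq]
            refine RState.ext' ?_ ?_ ?_ ?_ <;> simp <;> ring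
          · rw [if_neg hc, if_neg hc, hYeq]
            refine RState.ext' ?_ ?_ ?_ ?_ <;> simp <;> ring
      refine ⟨fun _ => hshift, ?_, ?_⟩
      · rw [hshift]
      · rw [hshift]
        simp only
        push_cast
        ring_nf
        linarith [le_refl (0 : ℝ)]
    · -- `U'`-process frozen: it stays put, mimic takes regular steps.
      have hY'S : Y'.S ≤ 0 := by omega
      have hfroz : rstep r F' U' h (t + 1) = Y' := by
        simp only [rstep, ← hY', if_pos hY'S]
      have hdec : (mimic r F' U').decide (List.ofFn fun i : Fin t => h i) (h t).2 = false := by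
        rw [mimic_decide]; simp [← hY', hY'S]
      have hstep : rstep r (mimic r F' U') U h (t + 1) = Y ∨
          (rstep r (mimic r F' U') U h (t + 1) =
            ⟨Y.C + 2, Y.S + (2 * (r : ℤ) - 3), Y.B, Y.I + 1⟩) ∨
          (rstep r (mimic r F' U') U h (t + 1) = ⟨Y.C, Y.S - 1, Y.B + 1, Y.I⟩) := by
        by_cases hYS : Y.S ≤ 0
        · left; simp only [rstep, ← hY, if_pos hYS]
        · by_cases hc : (h t).1
          · right; left
            simp only [rstep, ← hY, if_neg hYS, hdec, Bool.false_eq_true, if_false, if_pos hc]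
          · right; right
            simp only [rstep, ← hY, if_neg hYS, hdec, Bool.false_eq_true, if_false, if_neg hc]
      refine ⟨fun hpos => ?_, ?_, ?_⟩
      · rw [hfroz] at hpos; omega
      · rw [hfroz]
        rcases hstep with h1 | h1 | h1 <;> rw [h1] <;> (try dsimp only) <;> omega
      · rw [hfroz]
        rcases hstep with h1 | h1 | h1 <;> rw [h1] <;> (try dsimp only) <;> push_cast <;>
          nlinarith [ih3, hδ.le, hγr]

/-- monotonicity of `E[I_∞]` with respect to domination of the
initial state.  If `U` dominates `U'` (componentwise in `S` and `I`, and in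
the slack `S+B+I-γrC`), then for any admissible strategy `F'` from `U'` there
is an admissible strategy `F` from `U` with
`E[I_∞(U,F)] ≥ E[I_∞(U',F')]` (stated in `EReal`, adding the fixed initial
values `I` to the expected nonnegative increments). -/
theorem stmt10 (r : ℕ) (hr : 2 ≤ r) (ε : ℝ) (hε0 : 0 ≤ ε) (hε1 : ε ≤ 1)
    (δ : ℝ) (hδ : 0 < δ) (γ : ℝ) (hγ : γ = 1 - (1 + δ) / r)
    (F' : RStrategy) (U U' : RState)
    (hadm' : RAdmissible r γ F' U')
    (hS : U'.S ≤ U.S) (hI : U'.I ≤ U.I)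
    (hdom : (U'.S : ℝ) + (U'.B : ℝ) + (U'.I : ℝ) - γ * r * (U'.C : ℝ) ≤
      (U.S : ℝ) + (U.B : ℝ) + (U.I : ℝ) - γ * r * (U.C : ℝ)) :
    ∃ F : RStrategy, RAdmissible r γ F U ∧
      (((U'.I : ℝ) : EReal) + (EIinc r ε F' U' : EReal)) ≤
        (((U.I : ℝ) : EReal) + (EIinc r ε F U : EReal)) := by
  refine ⟨mimic r F' U', ?_, ?_⟩
  · intro h t
    obtain ⟨-, -, h3⟩ := mimic_invariant r hr δ hδ γ hγ F' U U' hS h t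
    have hadm := hadm' h t
    linarith
  · have hEI : EIinc r ε F' U' ≤ EIinc r ε (mimic r F' U') U := by
      refine iSup_mono fun t => ENNReal.tsum_le_tsum fun hf => ?_
      have haux : (mimic r F' U').aux = F'.aux := rfl
      rw [haux]
      refine mul_le_mul_right ?_ _
      have h2 := (mimic_invariant r hr δ hδ γ hγ F' U U' hS
        (extendFin (false, 0) hf) t).2.1
      exact_mod_cast Nat.cast_le.mpr (Int.toNat_le_toNat (by omega))
    have h1 : ((U'.I : ℝ) : EReal) ≤ ((U.I : ℝ) : EReal) := by
      exact_mod_cast hI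
    have h2 : (EIinc r ε F' U' : EReal) ≤ (EIinc r ε (mimic r F' U') U : EReal) := by
      exact_mod_cast hEI
    exact add_le_add h1 h2
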